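/- arXiv:0903.2871 — 2 statements merged into one kernel-verified Lean document; each statement's English description precedes it below -/
import Mathlib

section
/- Let G and G' be topological groups, with G connected and the topology of G' T1. Let Γ' be a countable subgroup of G', let φ : G → G' be a continuous map, and let γ ∈ G be an element such that φ(g)⁻¹ · φ(g·γ) ∈ Γ' for every g ∈ G. Then φ(g·γ) = φ(g) · φ(e)⁻¹ · φ(γ) for every g ∈ G, where e is the identity element of G. -/
/-- A countable space is Lindelöf. -/
lemma lindelof_of_countable {X : Type*} [TopologicalSpace X] [Countable X] :
    LindelofSpace X :=
  ⟨(Set.countable_univ).isLindelof⟩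

/-- A continuous map from a connected space into a countable regular T1 space is constant. -/
lemma constant_of_connected_to_countable {G X : Type*} [TopologicalSpace G] [ConnectedSpace G]
    [TopologicalSpace X] [Countable X] [T1Space X] [RegularSpace X]
    (f : G → X) (hf : Continuous f) (a b : G) : f a = f b := by
  by_contra hne
  have : LindelofSpace X := lindelof_of_countable
  obtain ⟨u, hu0, hu1, -⟩ := exists_continuous_zero_one_of_isClosed
    (isClosed_singleton (x := f a)) (isClosed_singleton (x := f b))
    (by simpa [Set.disjoint_singleton] using hne)
  have hcont : Continuous (fun g => u (f g)) := u.continuous.comp hf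
  have hpre : IsPreconnected (Set.range fun g => u (f g)) :=
    (isPreconnected_range hcont)
  have h0 : (0 : ℝ) ∈ Set.range fun g => u (f g) :=
    ⟨a, by simpa using hu0 rfl⟩
  have h1 : (1 : ℝ) ∈ Set.range fun g => u (f g) :=
    ⟨b, by simpa using hu1 rfl⟩
  have hIcc : Set.Icc (0 : ℝ) 1 ⊆ Set.range fun g => u (f g) :=
    hpre.Icc_subset h0 h1
  have hcount : (Set.range fun g => u (f g)).Countable := by
    have : (Set.range fun g => u (f g)) ⊆ Set.range u := by
      rintro x ⟨g, rfl⟩; exact ⟨f g, rfl⟩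
    exact (Set.countable_range u).mono this
  have : (Set.Icc (0 : ℝ) 1).Countable := hcount.mono hIcc
  have hmk : (Cardinal.mk (Set.Icc (0 : ℝ) 1)) = Cardinal.continuum :=
    Cardinal.mk_Icc_real (by norm_num)
  have hle : (Cardinal.mk (Set.Icc (0 : ℝ) 1)) ≤ Cardinal.aleph0 :=
    this.le_aleph0
  rw [hmk] at hle
  exact absurd hle (not_le.mpr Cardinal.aleph0_lt_continuum)

/-- Step (b) of Lemma 4.1: if `φ : G → G'` is continuous, `G` connected, `G'` a T1
topological group with countable subgroup `Γ'`, and `(φ g)⁻¹ * φ (g * γ) ∈ Γ'` for all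
`g`, then `φ (g * γ) = φ g * (φ 1)⁻¹ * φ γ` for all `g`. -/
theorem phi_mul_gamma_eq
    {G G' : Type*} [Group G] [TopologicalSpace G] [IsTopologicalGroup G] [ConnectedSpace G]
    [Group G'] [TopologicalSpace G'] [IsTopologicalGroup G'] [T1Space G']
    (Γ' : Subgroup G') (hΓ' : (Γ' : Set G').Countable)
    (φ : G → G') (hφ : Continuous φ) (γ : G)
    (hmem : ∀ g : G, (φ g)⁻¹ * φ (g * γ) ∈ Γ') :
    ∀ g : G, φ (g * γ) = φ g * (φ 1)⁻¹ * φ γ := by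
  intro g
  have : Countable (Γ' : Set G') := hΓ'.to_subtype
  let f : G → (Γ' : Set G') := fun g => ⟨(φ g)⁻¹ * φ (g * γ), hmem g⟩
  have hfc : Continuous f := by
    apply Continuous.subtype_mk
    exact (hφ.inv).mul (hφ.comp (continuous_mul_right γ))
  have key : f g = f 1 := constant_of_connected_to_countable f hfc g 1
  have key' : (φ g)⁻¹ * φ (g * γ) = (φ 1)⁻¹ * φ (1 * γ) := congrArg Subtype.val key
  rw [one_mul] at key'
  calc φ (g * γ) = φ g * ((φ g)⁻¹ * φ (g * γ)) := by group
    _ = φ g * ((φ 1)⁻¹ * φ γ) := by rw [key']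
    _ = φ g * (φ 1)⁻¹ * φ γ := by group
end

section
/- Let G and G' be topological groups, with G connected and G' Hausdorff. Let Γ be a dense subgroup of G and Γ' a countable subgroup of G'. Let φ : G → G' be a homeomorphism such that φ(g)⁻¹ · φ(g·γ) ∈ Γ' for every g ∈ G and every γ ∈ Γ. Then the map ψ : G → G' defined by ψ(g) = φ(e)⁻¹ · φ(g), where e is the identity of G, is an isomorphism of topological groups: ψ is a bijective group homomorphism which is a homeomorphism. -/
/-- In a T3 space, a countable preconnected set is a subsingleton. -/
lemma countable_preconnected_subsingleton {X : Type*} [TopologicalSpace X] [T2Space X]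
    [RegularSpace X] {s : Set X} (hc : s.Countable) (hp : IsPreconnected s) :
    s.Subsingleton := by
  intro x hx y hy
  by_contra hxy
  haveI := hc.to_subtype
  haveI : LindelofSpace s := ⟨(Set.countable_univ (α := s)).isLindelof⟩
  haveI : PreconnectedSpace s := Subtype.preconnectedSpace hp
  have hclx : IsClosed ({(⟨x, hx⟩ : s)} : Set s) := isClosed_singleton
  have hcly : IsClosed ({(⟨y, hy⟩ : s)} : Set s) := isClosed_singleton
  have hd : Disjoint ({(⟨x, hx⟩ : s)} : Set s) {(⟨y, hy⟩ : s)} := by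
    simp only [Set.disjoint_singleton_left, Set.mem_singleton_iff]
    exact fun h => hxy (congrArg Subtype.val h)
  obtain ⟨f, hf0, hf1, -⟩ := exists_continuous_zero_one_of_isClosed hclx hcly hd
  have hrange : IsPreconnected (Set.range f) :=
    isPreconnected_range f.continuous
  have hord : (Set.range f).OrdConnected := hrange.ordConnected
  have h01 : Set.Icc (0 : ℝ) 1 ⊆ Set.range f := by
    have h0 : (0 : ℝ) ∈ Set.range f := ⟨⟨x, hx⟩, hf0 rfl⟩
    have h1 : (1 : ℝ) ∈ Set.range f := ⟨⟨y, hy⟩, hf1 rfl⟩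
    exact hord.out h0 h1
  have hcnt : (Set.Icc (0 : ℝ) 1).Countable :=
    (Set.countable_range f).mono h01
  have : (Cardinal.mk (Set.Icc (0 : ℝ) 1)) ≤ Cardinal.aleph0 :=
    hcnt.le_aleph0
  rw [Cardinal.mk_Icc_real one_pos] at this
  exact absurd this (not_le.mpr Cardinal.aleph0_lt_continuum)

/-- Topological-group content of Lemma 4.1: if `φ : G ≃ₜ G'` is a homeomorphism of
topological groups, `G` connected with dense subgroup `Γ`, `G'` Hausdorff with countable
subgroup `Γ'`, and `φ` sends `Γ`-cosets into `Γ'`-cosets, then `ψ g = (φ 1)⁻¹ * φ g` is a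
bijective group homomorphism which is a homeomorphism. -/
theorem topgroup_iso_of_equivariant_homeomorph
    {G G' : Type*} [Group G] [TopologicalSpace G] [IsTopologicalGroup G] [ConnectedSpace G]
    [Group G'] [TopologicalSpace G'] [IsTopologicalGroup G'] [T2Space G']
    (Γ : Subgroup G) (hΓdense : Dense (Γ : Set G))
    (Γ' : Subgroup G') (hΓ'count : (Γ' : Set G').Countable)
    (φ : G ≃ₜ G')
    (hequiv : ∀ g : G, ∀ γ ∈ Γ, (φ g)⁻¹ * φ (g * γ) ∈ Γ') :
    (∀ g h : G, (φ 1)⁻¹ * φ (g * h) = ((φ 1)⁻¹ * φ g) * ((φ 1)⁻¹ * φ h)) ∧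
      Function.Bijective (fun g : G => (φ 1)⁻¹ * φ g) ∧
      IsHomeomorph (fun g : G => (φ 1)⁻¹ * φ g) := by
  -- Step 1: for each γ ∈ Γ the map g ↦ (φ g)⁻¹ * φ (g * γ) is constant.
  have key : ∀ γ ∈ Γ, ∀ g : G, (φ g)⁻¹ * φ (g * γ) = (φ 1)⁻¹ * φ γ := by
    intro γ hγ g
    set f : G → G' := fun g => (φ g)⁻¹ * φ (g * γ) with hf
    have hfc : Continuous f :=
      (φ.continuous.inv).mul (φ.continuous.comp (continuous_id.mul continuous_const))
    have hsub : Set.range f ⊆ (Γ' : Set G') := by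
      rintro _ ⟨g, rfl⟩; exact hequiv g γ hγ
    have hcnt : (Set.range f).Countable := hΓ'count.mono hsub
    have hpre : IsPreconnected (Set.range f) := isPreconnected_range hfc
    have := countable_preconnected_subsingleton hcnt hpre
      (Set.mem_range_self g) (Set.mem_range_self 1)
    simpa [hf, one_mul] using this
  -- Step 2: homomorphism identity on Γ, then extend by density and continuity.
  have hom : ∀ g h : G, (φ 1)⁻¹ * φ (g * h) = ((φ 1)⁻¹ * φ g) * ((φ 1)⁻¹ * φ h) := by
    intro g
    have hc1 : Continuous fun h : G => (φ 1)⁻¹ * φ (g * h) :=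
      continuous_const.mul (φ.continuous.comp (continuous_const.mul continuous_id))
    have hc2 : Continuous fun h : G => ((φ 1)⁻¹ * φ g) * ((φ 1)⁻¹ * φ h) :=
      continuous_const.mul (continuous_const.mul φ.continuous)
    have heq : Set.EqOn (fun h : G => (φ 1)⁻¹ * φ (g * h))
        (fun h : G => ((φ 1)⁻¹ * φ g) * ((φ 1)⁻¹ * φ h)) (Γ : Set G) := by
      intro γ hγ
      have := key γ hγ g
      simp only
      rw [← this, ← mul_assoc, mul_assoc ((φ 1)⁻¹ * φ g)]
      group
    have := Continuous.ext_on hΓdense hc1 hc2 heq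
    exact fun h => congrFun this h
  refine ⟨hom, ?_, ?_⟩
  · have : (fun g : G => (φ 1)⁻¹ * φ g) = ⇑(φ.trans (Homeomorph.mulLeft (φ 1)⁻¹)) := rfl
    rw [this]; exact (φ.trans (Homeomorph.mulLeft (φ 1)⁻¹)).bijective
  · have : (fun g : G => (φ 1)⁻¹ * φ g) = ⇑(φ.trans (Homeomorph.mulLeft (φ 1)⁻¹)) := rfl
    rw [this]; exact (φ.trans (Homeomorph.mulLeft (φ 1)⁻¹)).isHomeomorph
end
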